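/- Suppose f ∈ ℝ^n and g ∈ ℝ^m satisfy the optimality conditions a = diag(e^{-f/ε}) K e^{-g/ε} and b = diag(e^{-g/ε}) Kᵀ e^{-f/ε}, and set P := diag(e^{-f/ε}) K diag(e^{-g/ε}). Then P ∈ U(a,b), and P minimizes the entropically regularized transport objective: for every Q ∈ U(a,b) with all entries positive, ⟨C, Q⟩ + ε ⟨Q, log Q − 1_{n,m}⟩ ≥ ⟨C, P⟩ + ε ⟨P, log P − 1_{n,m}⟩. -/

import Mathlib

open Matrix

/-- If `(f, g)` satisfies the optimality conditions
`a = diag(e^{-f/ε}) K e^{-g/ε}` and `b = diag(e^{-g/ε}) Kᵀ e^{-f/ε}`, then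
`P := diag(e^{-f/ε}) K diag(e^{-g/ε})` lies in `U(a,b)` and minimizes the
entropically regularized transport objective over all positive plans in `U(a,b)`. -/
theorem optimality_conditions_give_minimizer (n m : ℕ) (a : Fin n → ℝ) (b : Fin m → ℝ)
    (C : Matrix (Fin n) (Fin m) ℝ) (ε : ℝ) (hε : 0 < ε)
    (f : Fin n → ℝ) (g : Fin m → ℝ)
    (ha : ∀ i, a i =
      Real.exp (-f i / ε) *
        ((fun i j => Real.exp (-C i j / ε)) *ᵥ fun j => Real.exp (-g j / ε)) i)
    (hb : ∀ j, b j =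
      Real.exp (-g j / ε) *
        ((fun i j => Real.exp (-C i j / ε))ᵀ *ᵥ fun i => Real.exp (-f i / ε)) j) :
    let P : Matrix (Fin n) (Fin m) ℝ :=
      fun i j => Real.exp (-f i / ε) * Real.exp (-C i j / ε) * Real.exp (-g j / ε)
    ((∀ i j, 0 ≤ P i j) ∧ P *ᵥ 1 = a ∧ Pᵀ *ᵥ 1 = b) ∧
      ∀ Q : Matrix (Fin n) (Fin m) ℝ,
        (∀ i j, 0 ≤ Q i j) → Q *ᵥ 1 = a → Qᵀ *ᵥ 1 = b → (∀ i j, 0 < Q i j) →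
        (∑ i, ∑ j, C i j * Q i j) + ε * ∑ i, ∑ j, Q i j * (Real.log (Q i j) - 1) ≥
          (∑ i, ∑ j, C i j * P i j) + ε * ∑ i, ∑ j, P i j * (Real.log (P i j) - 1) := by
  intro P
  have hPdef : ∀ i j, P i j =
      Real.exp (-f i / ε) * Real.exp (-C i j / ε) * Real.exp (-g j / ε) := fun i j => rfl
  have hPpos : ∀ i j, 0 < P i j := by
    intro i j; rw [hPdef]; positivity
  have hlog : ∀ i j, ε * Real.log (P i j) = -f i - C i j - g j := by
    intro i j
    rw [hPdef, ← Real.exp_add, ← Real.exp_add, Real.log_exp]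
    field_simp
    ring
  have rowP : ∀ i, ∑ j, P i j = a i := by
    intro i
    rw [ha i]
    simp only [Matrix.mulVec, dotProduct]
    rw [Finset.mul_sum]
    exact Finset.sum_congr rfl fun j _ => by rw [hPdef]; ring
  have colP : ∀ j, ∑ i, P i j = b j := by
    intro j
    rw [hb j]
    simp only [Matrix.mulVec, dotProduct, Matrix.transpose_apply]
    rw [Finset.mul_sum]
    exact Finset.sum_congr rfl fun i _ => by rw [hPdef]; simp only [Matrix.transpose, Matrix.of_apply]; ring
  have hProw : P *ᵥ 1 = a := by
    funext i
    simpa [Matrix.mulVec, dotProduct] using rowP i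
  have hPcol : Pᵀ *ᵥ 1 = b := by
    funext j
    simpa [Matrix.mulVec, dotProduct, Matrix.transpose_apply] using colP j
  refine ⟨⟨fun i j => (hPpos i j).le, hProw, hPcol⟩, ?_⟩
  intro Q hQ0 hQrow hQcol hQpos
  have rowQ : ∀ i, ∑ j, Q i j = a i := by
    intro i
    have := congrFun hQrow i
    simpa [Matrix.mulVec, dotProduct] using this
  have colQ : ∀ j, ∑ i, Q i j = b j := by
    intro j
    have := congrFun hQcol j
    simpa [Matrix.mulVec, dotProduct, Matrix.transpose_apply] using this
  have key : ∀ i j,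
      C i j * P i j + ε * (P i j * (Real.log (P i j) - 1)) +
        (-f i - g j) * (Q i j - P i j) ≤
      C i j * Q i j + ε * (Q i j * (Real.log (Q i j) - 1)) := by
    intro i j
    have hp := hPpos i j
    have hq := hQpos i j
    have h1 : Real.log (P i j) - Real.log (Q i j) ≤ P i j / Q i j - 1 := by
      rw [← Real.log_div hp.ne' hq.ne']
      exact Real.log_le_sub_one_of_pos (div_pos hp hq)
    have h2 : Q i j * (P i j / Q i j) = P i j := by field_simp
    have h3 : Q i j * (Real.log (P i j) - Real.log (Q i j)) ≤ P i j - Q i j := by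
      nlinarith [mul_le_mul_of_nonneg_left h1 hq.le, h2]
    have h4 : ε * (Q i j * (Real.log (P i j) - Real.log (Q i j))) ≤ ε * (P i j - Q i j) :=
      mul_le_mul_of_nonneg_left h3 hε.le
    have h5 : ε * Real.log (P i j) * (Q i j - P i j) =
        (-f i - C i j - g j) * (Q i j - P i j) := by rw [hlog]
    nlinarith [h4, h5]
  have hsum :
      (∑ i, ∑ j, (C i j * P i j + ε * (P i j * (Real.log (P i j) - 1)) +
        (-f i - g j) * (Q i j - P i j))) ≤
      ∑ i, ∑ j, (C i j * Q i j + ε * (Q i j * (Real.log (Q i j) - 1))) :=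
    Finset.sum_le_sum fun i _ => Finset.sum_le_sum fun j _ => key i j
  have hzero : ∑ i, ∑ j, (-f i - g j) * (Q i j - P i j) = 0 := by
    have h1 : ∑ i, ∑ j, (-f i) * (Q i j - P i j) = 0 := by
      refine Finset.sum_eq_zero fun i _ => ?_
      rw [← Finset.mul_sum, Finset.sum_sub_distrib, rowQ i, rowP i]
      ring
    have h2 : ∑ j, ∑ i, (-g j) * (Q i j - P i j) = 0 := by
      refine Finset.sum_eq_zero fun j _ => ?_
      rw [← Finset.mul_sum, Finset.sum_sub_distrib, colQ j, colP j]
      ring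
    calc ∑ i, ∑ j, (-f i - g j) * (Q i j - P i j)
        = (∑ i, ∑ j, (-f i) * (Q i j - P i j)) +
          ∑ i, ∑ j, (-g j) * (Q i j - P i j) := by
          rw [← Finset.sum_add_distrib]
          exact Finset.sum_congr rfl fun i _ => by
            rw [← Finset.sum_add_distrib]
            exact Finset.sum_congr rfl fun j _ => by ring
      _ = (∑ i, ∑ j, (-f i) * (Q i j - P i j)) +
          ∑ j, ∑ i, (-g j) * (Q i j - P i j) := by
          congr 1
          exact Finset.sum_comm
      _ = 0 := by rw [h1, h2]; ring
  simp only [Finset.sum_add_distrib, ← Finset.mul_sum] at hsum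
  linarith [hsum, hzero]
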